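/- Discrete nonlocal elasticity Euler–Lagrange equations (dual-horizon form, Eq. (55)): in the discrete nonlocal setting, let g : I × I → ℝ^d, ω : I × I → ℝ, b : I → ℝ^d, and let φ : ℝ^{d×d} → ℝ be differentiable. For a displacement field u : I → ℝ^d define the nonlocal deformation gradient F_i(u) := 𝟙_d + ∑_{j∈S(i)} ω(i,j)·(u(j)−u(i))·g(i,j)ᵀ·V(j) and the total energy E(u) := ∑_{i∈I} φ(F_i(u))·V(i) − ∑_{i∈I} ⟪b(i), u(i)⟫·V(i). Let P_i ∈ ℝ^{d×d} denote the matrix of partial derivatives (∂φ/∂F_{ab})(F_i(u)), so that the Fréchet derivative of φ at F_i(u) applied to H equals ∑_{a,b}(P_i)_{ab}·H_{ab}. Then for every variation δ : I → ℝ^d, (d/dt)E(u + t·δ)|_{t=0} = ∑_{i∈I} ⟪ ∑_{j∈S'(i)} ω(j,i)·P_j·g(j,i)·V(j) − ∑_{j∈S(i)} ω(i,j)·P_i·g(i,j)·V(j) − b(i), δ(i) ⟫·V(i). Consequently u is a critical point of E if and only if for every i ∈ I: ∑_{j∈S(i)} ω(i,j)·P_i·g(i,j)·V(j) − ∑_{j∈S'(i)}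 ω(j,i)·P_j·g(j,i)·V(j) + b(i) = 0. -/

import Mathlib

open Finset Matrix

lemma aux_swap' {I : Type*} [Fintype I] [DecidableEq I] (S : I → Finset I) (F : I → I → ℝ) :
    ∑ i, ∑ j ∈ S i, F i j = ∑ j, ∑ i ∈ Finset.univ.filter (fun i => j ∈ S i), F i j := by
  have h : ∀ i, ∑ j ∈ S i, F i j = ∑ j, if j ∈ S i then F i j else 0 := fun i => by
    rw [Finset.sum_ite_mem, Finset.univ_inter]
  simp_rw [h, Finset.sum_filter]
  exact Finset.sum_comm

lemma aux_key' {d : ℕ} (P : Matrix (Fin d) (Fin d) ℝ) (w v : Fin d → ℝ) :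
    ∑ a, ∑ c, P a c * (w a * v c) = (P *ᵥ v) ⬝ᵥ w := by
  simp only [Matrix.mulVec, dotProduct, Finset.sum_mul]
  exact Finset.sum_congr rfl fun a _ => Finset.sum_congr rfl fun c _ => by ring

lemma aux_sum_dot' {α : Type*} {d : ℕ} (s : Finset α) (f : α → Fin d → ℝ) (v : Fin d → ℝ) :
    (∑ j ∈ s, f j) ⬝ᵥ v = ∑ j ∈ s, f j ⬝ᵥ v := by
  simp only [dotProduct, Finset.sum_apply, Finset.sum_mul]
  exact Finset.sum_comm

lemma aux_triple' {α γ : Type*} (s : Finset α) (t : Finset α) (r : Finset γ)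
    (f : α → α → γ → ℝ) :
    ∑ a ∈ s, ∑ c ∈ t, ∑ j ∈ r, f a c j = ∑ j ∈ r, ∑ a ∈ s, ∑ c ∈ t, f a c j := by
  calc ∑ a ∈ s, ∑ c ∈ t, ∑ j ∈ r, f a c j
      = ∑ a ∈ s, ∑ j ∈ r, ∑ c ∈ t, f a c j :=
        Finset.sum_congr rfl fun a _ => Finset.sum_comm
    _ = ∑ j ∈ r, ∑ a ∈ s, ∑ c ∈ t, f a c j := Finset.sum_comm

/-- Discrete nonlocal elasticity Euler–Lagrange equations (dual-horizon form, Eq. (55)). -/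
theorem nonlocal_elasticity_euler_lagrange {I : Type*} [Fintype I] [DecidableEq I] {d : ℕ}
    (V : I → ℝ) (hV : ∀ i, 0 < V i)
    (S : I → Finset I)
    (g : I → I → Fin d → ℝ) (ω : I → I → ℝ) (b : I → Fin d → ℝ)
    (φ : Matrix (Fin d) (Fin d) ℝ → ℝ)
    (Fm : (I → Fin d → ℝ) → I → Matrix (Fin d) (Fin d) ℝ)
    (hFm : ∀ u i, Fm u i = 1 + ∑ j ∈ S i, (ω i j * V j) • vecMulVec (u j - u i) (g i j))
    (E : (I → Fin d → ℝ) → ℝ)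
    (hE : ∀ u, E u = (∑ i, φ (Fm u i) * V i) - ∑ i, (b i ⬝ᵥ u i) * V i)
    (u : I → Fin d → ℝ)
    (P : I → Matrix (Fin d) (Fin d) ℝ)
    (hP : ∀ i (H : Matrix (Fin d) (Fin d) ℝ),
        HasDerivAt (fun t : ℝ => φ (Fm u i + t • H)) (∑ a, ∑ c, P i a c * H a c) 0) :
    (∀ δ : I → Fin d → ℝ,
        HasDerivAt (fun t : ℝ => E (u + t • δ))
          (∑ i, (((∑ j ∈ univ.filter (fun j => i ∈ S j), (ω j i * V j) • (P j *ᵥ g j i))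
              - (∑ j ∈ S i, (ω i j * V j) • (P i *ᵥ g i j))
              - b i) ⬝ᵥ δ i) * V i) 0)
    ∧ ((∀ δ : I → Fin d → ℝ, deriv (fun t : ℝ => E (u + t • δ)) 0 = 0)
        ↔ ∀ i, (∑ j ∈ S i, (ω i j * V j) • (P i *ᵥ g i j))
              - (∑ j ∈ univ.filter (fun j => i ∈ S j), (ω j i * V j) • (P j *ᵥ g j i))
              + b i = 0) := by
  have hmain : ∀ δ : I → Fin d → ℝ,
      HasDerivAt (fun t : ℝ => E (u + t • δ))
        (∑ i, (((∑ j ∈ univ.filter (fun j => i ∈ S j), (ω j i * V j) • (P j *ᵥ g j i))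
            - (∑ j ∈ S i, (ω i j * V j) • (P i *ᵥ g i j))
            - b i) ⬝ᵥ δ i) * V i) 0 := by
    intro δ
    set Hm : I → Matrix (Fin d) (Fin d) ℝ :=
      fun i => ∑ j ∈ S i, (ω i j * V j) • vecMulVec (δ j - δ i) (g i j) with hHm
    have hF : ∀ (t : ℝ) (i : I), Fm (u + t • δ) i = Fm u i + t • Hm i := by
      intro t i
      rw [hFm, hFm, hHm]
      ext a c
      simp only [Matrix.add_apply, Matrix.smul_apply, Matrix.sum_apply,
        Matrix.vecMulVec_apply, Pi.add_apply, Pi.smul_apply, Pi.sub_apply,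
        smul_eq_mul, Finset.smul_sum]
      rw [add_assoc, ← Finset.sum_add_distrib]
      congr 1
      exact Finset.sum_congr rfl fun j _ => by ring
    have hEt : ∀ t : ℝ, E (u + t • δ) =
        (∑ i, φ (Fm u i + t • Hm i) * V i)
          - ∑ i, ((b i ⬝ᵥ u i) + t * (b i ⬝ᵥ δ i)) * V i := by
      intro t
      rw [hE]
      congr 1
      · exact Finset.sum_congr rfl fun i _ => by rw [hF]
      · refine Finset.sum_congr rfl fun i _ => ?_
        simp [dotProduct_add, dotProduct_smul, smul_eq_mul]
    have h1 : HasDerivAt (fun t : ℝ => ∑ i, φ (Fm u i + t • Hm i) * V i)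
        (∑ i, (∑ a, ∑ c, P i a c * Hm i a c) * V i) 0 :=
      HasDerivAt.fun_sum fun i _ => (hP i (Hm i)).mul_const (V i)
    have h2 : HasDerivAt (fun t : ℝ => ∑ i, ((b i ⬝ᵥ u i) + t * (b i ⬝ᵥ δ i)) * V i)
        (∑ i, (b i ⬝ᵥ δ i) * V i) 0 :=
      HasDerivAt.fun_sum fun i _ => by
        simpa using
          (((hasDerivAt_id (0 : ℝ)).mul_const (b i ⬝ᵥ δ i)).const_add (b i ⬝ᵥ u i)).mul_const (V i)
    have hD := h1.sub h2
    have hfun : (fun t : ℝ => E (u + t • δ)) =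
        fun t : ℝ => (∑ i, φ (Fm u i + t • Hm i) * V i)
          - ∑ i, ((b i ⬝ᵥ u i) + t * (b i ⬝ᵥ δ i)) * V i := funext hEt
    rw [hfun]
    -- now identify the derivative value
    have hlin : ∀ i, (∑ a, ∑ c, P i a c * Hm i a c)
        = ∑ j ∈ S i, (ω i j * V j) * ((P i *ᵥ g i j) ⬝ᵥ (δ j - δ i)) := by
      intro i
      rw [hHm]
      simp only [Matrix.sum_apply, Matrix.smul_apply, Matrix.vecMulVec_apply, smul_eq_mul]
      simp_rw [Finset.mul_sum]
      rw [aux_triple']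
      refine Finset.sum_congr rfl fun j _ => ?_
      rw [← aux_key', Finset.mul_sum]
      refine Finset.sum_congr rfl fun a _ => ?_
      rw [Finset.mul_sum]
      exact Finset.sum_congr rfl fun c _ => by ring
    have R : (∑ i, (∑ a, ∑ c, P i a c * Hm i a c) * V i)
        = (∑ i, ∑ j ∈ S i, (ω i j * V j) * ((P i *ᵥ g i j) ⬝ᵥ δ j) * V i)
          - (∑ i, ∑ j ∈ S i, (ω i j * V j) * ((P i *ᵥ g i j) ⬝ᵥ δ i) * V i) := by
      rw [← Finset.sum_sub_distrib]
      refine Finset.sum_congr rfl fun i _ => ?_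
      rw [hlin i, ← Finset.sum_sub_distrib, Finset.sum_mul]
      exact Finset.sum_congr rfl fun j _ => by rw [dotProduct_sub]; ring
    have hdual : ∑ i, ∑ j ∈ S i, (ω i j * V j) * ((P i *ᵥ g i j) ⬝ᵥ δ j) * V i
        = ∑ i, ((∑ j ∈ univ.filter (fun j => i ∈ S j), (ω j i * V j) • (P j *ᵥ g j i)) ⬝ᵥ δ i)
            * V i := by
      rw [aux_swap' S]
      refine Finset.sum_congr rfl fun k _ => ?_
      rw [aux_sum_dot', Finset.sum_mul]
      refine Finset.sum_congr rfl fun l _ => ?_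
      rw [smul_dotProduct, smul_eq_mul]
      ring
    have hown : ∀ i, ((∑ j ∈ S i, (ω i j * V j) • (P i *ᵥ g i j)) ⬝ᵥ δ i) * V i
        = ∑ j ∈ S i, (ω i j * V j) * ((P i *ᵥ g i j) ⬝ᵥ δ i) * V i := by
      intro i
      rw [aux_sum_dot', Finset.sum_mul]
      exact Finset.sum_congr rfl fun j _ => by rw [smul_dotProduct, smul_eq_mul]
    have heq : (∑ i, (∑ a, ∑ c, P i a c * Hm i a c) * V i) - ∑ i, (b i ⬝ᵥ δ i) * V i
        = ∑ i, (((∑ j ∈ univ.filter (fun j => i ∈ S j), (ω j i * V j) • (P j *ᵥ g j i))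
            - (∑ j ∈ S i, (ω i j * V j) • (P i *ᵥ g i j))
            - b i) ⬝ᵥ δ i) * V i := by
      rw [R, hdual]
      rw [show (∑ i, (((∑ j ∈ univ.filter (fun j => i ∈ S j), (ω j i * V j) • (P j *ᵥ g j i))
            - (∑ j ∈ S i, (ω i j * V j) • (P i *ᵥ g i j))
            - b i) ⬝ᵥ δ i) * V i)
          = (∑ i, ((∑ j ∈ univ.filter (fun j => i ∈ S j), (ω j i * V j) • (P j *ᵥ g j i)) ⬝ᵥ δ i)
              * V i)
            - (∑ i, ((∑ j ∈ S i, (ω i j * V j) • (P i *ᵥ g i j)) ⬝ᵥ δ i) * V i)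
            - ∑ i, (b i ⬝ᵥ δ i) * V i from by
        rw [← Finset.sum_sub_distrib, ← Finset.sum_sub_distrib]
        exact Finset.sum_congr rfl fun i _ => by
          rw [sub_dotProduct, sub_dotProduct]; ring]
      simp_rw [hown]
    exact heq ▸ hD
  refine ⟨hmain, ?_⟩
  constructor
  · intro h i
    set A : I → Fin d → ℝ := fun k =>
      (∑ j ∈ univ.filter (fun j => k ∈ S j), (ω j k * V j) • (P j *ᵥ g j k))
        - (∑ j ∈ S k, (ω k j * V j) • (P k *ᵥ g k j)) - b k with hA
    set δ : I → Fin d → ℝ := fun j => if j = i then A i else 0 with hδ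
    have h0 := h δ
    rw [(hmain δ).deriv] at h0
    rw [Finset.sum_eq_single i (fun k _ hk => by simp [hδ, hk, hA]) (by simp)] at h0
    simp only [hδ, if_pos rfl, hA] at h0
    have hVne : V i ≠ 0 := ne_of_gt (hV i)
    have hdot : (A i ⬝ᵥ A i) = 0 := by
      rcases mul_eq_zero.mp h0 with h' | h'
      · exact h'
      · exact absurd h' hVne
    have hAzero : A i = 0 := by
      funext a
      have hsum : ∑ a, A i a * A i a = 0 := hdot
      have := (Finset.sum_eq_zero_iff_of_nonneg
        (fun a _ => mul_self_nonneg (A i a))).mp hsum a (Finset.mem_univ a)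
      exact (mul_self_eq_zero).mp this
    have : (∑ j ∈ S i, (ω i j * V j) • (P i *ᵥ g i j))
        - (∑ j ∈ univ.filter (fun j => i ∈ S j), (ω j i * V j) • (P j *ᵥ g j i))
        + b i = -(A i) := by simp only [hA]; abel
    rw [this, hAzero, neg_zero]
  · intro h δ
    rw [(hmain δ).deriv]
    refine Finset.sum_eq_zero fun i _ => ?_
    have hAi : (∑ j ∈ univ.filter (fun j => i ∈ S j), (ω j i * V j) • (P j *ᵥ g j i))
        - (∑ j ∈ S i, (ω i j * V j) • (P i *ᵥ g i j)) - b i = 0 := by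
      have h' := h i
      have : (∑ j ∈ univ.filter (fun j => i ∈ S j), (ω j i * V j) • (P j *ᵥ g j i))
          - (∑ j ∈ S i, (ω i j * V j) • (P i *ᵥ g i j)) - b i
        = -((∑ j ∈ S i, (ω i j * V j) • (P i *ᵥ g i j))
            - (∑ j ∈ univ.filter (fun j => i ∈ S j), (ω j i * V j) • (P j *ᵥ g j i))
            + b i) := by abel
      rw [this, h', neg_zero]
    rw [hAi, zero_dotProduct, zero_mul]
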